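/- Characterization of termination: a closed λ-term t is weak-head normalizing (reduces in finitely many →wh steps to an abstraction) if and only if the judgment ⊢ t : ⋆ is derivable in the tree type system. -/

import Mathlib

/-! # Tree intersection types -/

mutual
/-- Linear types: `A ::= ⋆ | T → A`. -/
inductive LinTy : Type where
  | star : LinTy
  | arr : TreeTy → LinTy → LinTy
/-- Generic types: linear types or tree types. -/
inductive GenTy : Type where
  | lin : LinTy → GenTy
  | tree : TreeTy → GenTy
/-- Tree types: finite sequences of generic types. -/
inductive TreeTy : Type where
  | node : List GenTy → TreeTy
end

mutual
/-- Leaves of a generic type. -/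
def GenTy.leaves : GenTy → List LinTy
  | .lin A => [A]
  | .tree T => TreeTy.leaves T
  termination_by g => sizeOf g
/-- Leaves extraction on tree types. -/
def TreeTy.leaves : TreeTy → List LinTy
  | .node gs => gs.attach.flatMap (fun g => GenTy.leaves g.1)
  termination_by T => sizeOf T
  decreasing_by simp_wf; have := List.sizeOf_lt_of_mem g.2; omega
end

/-- Concatenation `⊎` of tree types (sequences). -/
def TreeTy.cat : TreeTy → TreeTy → TreeTy
  | .node a, .node b => .node (a ++ b)

mutual
/-- Weight (size) of a linear type, with parameter `X`. -/
def LinTy.weight (X : ℕ) : LinTy → ℕ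
  | .star => 0
  | .arr T A => max (TreeTy.weight X T) (LinTy.weight X A + 1)
  termination_by A => sizeOf A
def GenTy.weight (X : ℕ) : GenTy → ℕ
  | .lin A => LinTy.weight X A
  | .tree T => TreeTy.weight X T
  termination_by g => sizeOf g
def TreeTy.weight (X : ℕ) : TreeTy → ℕ
  | .node gs => X + (gs.attach.map (fun g => GenTy.weight X g.1)).foldr max 0
  termination_by T => sizeOf T
  decreasing_by simp_wf; have := List.sizeOf_lt_of_mem g.2; omega
end

mutual
/-- Hereditary absence of empty sequences (every leaf context ends in `⋆`). -/
inductive LinTy.Good : LinTy → Prop where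
  | star : LinTy.Good .star
  | arr {T A} : TreeTy.Good T → LinTy.Good A → LinTy.Good (.arr T A)
inductive GenTy.Good : GenTy → Prop where
  | lin {A} : LinTy.Good A → GenTy.Good (.lin A)
  | tree {T} : TreeTy.Good T → GenTy.Good (.tree T)
inductive TreeTy.Good : TreeTy → Prop where
  | node {gs : List GenTy} : gs ≠ [] → (∀ g ∈ gs, GenTy.Good g) → TreeTy.Good (.node gs)
end

/-! ## Leaf contexts -/

/-- One-hole contexts into tree types whose hole sits at a leaf position. -/
inductive LeafCtx : Type where
  | here (l r : List GenTy) : LeafCtx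
  | deeper (l : List GenTy) (L : LeafCtx) (r : List GenTy) : LeafCtx

/-- Plugging a linear type into a leaf context. -/
def LeafCtx.plug : LeafCtx → LinTy → TreeTy
  | .here l r, A => .node (l ++ .lin A :: r)
  | .deeper l L r, A => .node (l ++ .tree (L.plug A) :: r)

/-- Number of leaves strictly to the left of the hole. -/
def LeafCtx.holeIdx : LeafCtx → ℕ
  | .here l _ => (TreeTy.node l).leaves.length
  | .deeper l L _ => (TreeTy.node l).leaves.length + L.holeIdx

/-! ## Type contexts -/

mutual
/-- Linear type contexts: `𝕃c ::= ⟨·⟩ | T → 𝕃c | 𝕋 → A`. -/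
inductive LinCtx : Type where
  | hole : LinCtx
  | arrR : TreeTy → LinCtx → LinCtx
  | arrL : TreeCtx → LinTy → LinCtx
/-- Tree type contexts. -/
inductive TreeCtx : Type where
  | node : List GenTy → GenCtx → List GenTy → TreeCtx
/-- Generic type contexts. -/
inductive GenCtx : Type where
  | lin : LinCtx → GenCtx
  | tree : TreeCtx → GenCtx
end

mutual
def LinCtx.plug : LinCtx → LinTy → LinTy
  | .hole, B => B
  | .arrR T C, B => .arr T (C.plug B)
  | .arrL C A, B => .arr (C.plug B) A
def TreeCtx.plug : TreeCtx → LinTy → TreeTy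
  | .node l C r, B => .node (l ++ C.plug B :: r)
def GenCtx.plug : GenCtx → LinTy → GenTy
  | .lin C, B => .lin (C.plug B)
  | .tree C, B => .tree (C.plug B)
end

mutual
/-- Branch size of a linear type context. -/
def LinCtx.bsize (X : ℕ) : LinCtx → ℕ
  | .hole => 0
  | .arrR _ C => 1 + C.bsize X
  | .arrL C _ => C.bsize X
def TreeCtx.bsize (X : ℕ) : TreeCtx → ℕ
  | .node _ C _ => X + C.bsize X
def GenCtx.bsize (X : ℕ) : GenCtx → ℕ
  | .lin C => C.bsize X
  | .tree C => C.bsize X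
end

/-! # λ-terms (de Bruijn) and Closed Call-by-Name -/

inductive Term : Type where
  | var : ℕ → Term
  | lam : Term → Term
  | app : Term → Term → Term

/-- Shifting of free indices `≥ c` by `d`. -/
def Term.lift (d : ℕ) : ℕ → Term → Term
  | c, .var n => if n < c then .var n else .var (n + d)
  | c, .lam t => .lam (Term.lift d (c+1) t)
  | c, .app t u => .app (Term.lift d c t) (Term.lift d c u)

/-- Capture-avoiding substitution of `u` for index `k`. -/
def Term.subst (u : Term) : ℕ → Term → Term
  | k, .var n => if n = k then Term.lift k 0 u else if k < n then .var (n-1) else .var n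
  | k, .lam t => .lam (Term.subst u (k+1) t)
  | k, .app t s => .app (Term.subst u k t) (Term.subst u k s)

/-- `t{x₀ := u}`. -/
def Term.subst0 (t u : Term) : Term := Term.subst u 0 t

def Term.ClosedUnder : Term → ℕ → Prop
  | .var n, k => n < k
  | .lam t, k => t.ClosedUnder (k+1)
  | .app t u, k => t.ClosedUnder k ∧ u.ClosedUnder k

/-- Closed terms: no free variables. -/
def Term.Closed (t : Term) : Prop := t.ClosedUnder 0

/-- Occurrence of a free variable. -/
def Term.FreeIn : Term → ℕ → Prop
  | .var n, x => n = x
  | .lam t, x => t.FreeIn (x+1)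
  | .app t u, x => t.FreeIn x ∨ u.FreeIn x

/-- Weak head reduction `(λy.t)u r₁…r_h →wh t{y:=u} r₁…r_h`. -/
inductive Whr : Term → Term → Prop where
  | beta (t u : Term) : Whr (.app (.lam t) u) (t.subst0 u)
  | appL {t t' : Term} (u : Term) : Whr t t' → Whr (.app t u) (.app t' u)

/-- `n`-step weak head reduction. -/
inductive WhN : ℕ → Term → Term → Prop where
  | refl (t : Term) : WhN 0 t t
  | step {n t u v} : Whr t u → WhN n u v → WhN (n+1) t v

/-! # Type environments and the tree type system -/

/-- Type environments: maps from (de Bruijn) variables to tree types. -/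
def Env : Type := ℕ → TreeTy

def Env.empty : Env := fun _ => .node []

/-- Pointwise concatenation `Γ ⊎ Δ`. -/
def Env.union (Γ Δ : Env) : Env := fun x => (Γ x).cat (Δ x)

/-- Environment of the variable axiom: `x : [A]`. -/
def Env.single (x : ℕ) (A : LinTy) : Env :=
  fun y => if y = x then .node [.lin A] else .node []

/-- Environment extension `Γ, x₀:T` (de Bruijn cons). -/
def Env.cons (T : TreeTy) (Γ : Env) : Env
  | 0 => T
  | n+1 => Γ n

/-- Wrap a (non-empty) tree type in one extra sequence layer. -/
def TreeTy.wrap : TreeTy → TreeTy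
  | .node [] => .node []
  | T => .node [.tree T]

/-- `[Γ]`: wrap each (non-empty) type of the environment in one extra layer. -/
def Env.wrap (Γ : Env) : Env := fun x => (Γ x).wrap

/-- Finite union of environments. -/
def Env.unionF {n : ℕ} (Γs : Fin n → Env) : Env :=
  (List.ofFn Γs).foldr Env.union Env.empty

/-- Tree type derivations. -/
inductive Deriv : Env → Term → GenTy → Type where
  | var (x : ℕ) (A : LinTy) : Deriv (Env.single x A) (.var x) (.lin A)
  | lam {Γ : Env} {T : TreeTy} {t : Term} {A : LinTy} :
      Deriv (Env.cons T Γ) t (.lin A) → Deriv Γ (.lam t) (.lin (.arr T A))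
  | lamStar (t : Term) : Deriv Env.empty (.lam t) (.lin .star)
  | app {Γ Δ : Env} {t u : Term} {T : TreeTy} {A : LinTy} :
      Deriv Γ t (.lin (.arr T A)) → Deriv Δ u (.tree T) →
      Deriv (Env.union Γ Δ) (.app t u) (.lin A)
  | many {t : Term} (n : ℕ) (Γs : Fin n → Env) (Gs : Fin n → GenTy)
      (prems : ∀ i, Deriv (Γs i) t (Gs i)) :
      Deriv (Env.wrap (Env.unionF Γs)) t (.tree (.node (List.ofFn Gs)))
  | none (t : Term) : Deriv Env.empty t (.tree (.node []))

/-- Size of a derivation: number of rules that are not T-many/T-none. -/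
def Deriv.size : ∀ {Γ t G}, Deriv Γ t G → ℕ
  | _, _, _, .var _ _ => 1
  | _, _, _, .lam π => π.size + 1
  | _, _, _, .lamStar _ => 1
  | _, _, _, .app π ρ => π.size + ρ.size + 1
  | _, _, _, .many n _ _ prems => ∑ i : Fin n, (prems i).size
  | _, _, _, .none _ => 0

/-- Weight of a weighted derivation, with parameter `X`. -/
def Deriv.weight (X : ℕ) : ∀ {Γ t G}, Deriv Γ t G → ℕ
  | _, _, _, .var _ A => A.weight X
  | _, _, _, .lam (T := T) (A := A) π => max (π.weight X) (LinTy.weight X (.arr T A))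
  | _, _, _, .lamStar _ => 0
  | _, _, _, .app π ρ => max (π.weight X) (ρ.weight X)
  | _, _, _, .many n _ _ prems => X + (Finset.univ.sup fun i => (prems i).weight X)
  | _, _, _, .none _ => 0

/-- `SubD π n π'`: the judgment of `π'` occurs in `π`, crossing `n` T-many rules
descending from it to the root. -/
inductive SubD : ∀ {Γ t G}, Deriv Γ t G → ℕ → ∀ {Γ' u G'}, Deriv Γ' u G' → Prop where
  | refl {Γ t G} (π : Deriv Γ t G) : SubD π 0 π
  | lam {Γ T t A} {π : Deriv (Env.cons T Γ) t (.lin A)} {n} {Γ' u G'} {π' : Deriv Γ' u G'} :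
      SubD π n π' → SubD (Deriv.lam π) n π'
  | appL {Γ Δ t u T A} {π : Deriv Γ t (.lin (.arr T A))} {ρ : Deriv Δ u (.tree T)}
      {n} {Γ' v G'} {π' : Deriv Γ' v G'} :
      SubD π n π' → SubD (Deriv.app π ρ) n π'
  | appR {Γ Δ t u T A} {π : Deriv Γ t (.lin (.arr T A))} {ρ : Deriv Δ u (.tree T)}
      {n} {Γ' v G'} {π' : Deriv Γ' v G'} :
      SubD ρ n π' → SubD (Deriv.app π ρ) n π'
  | many {t k} {Γs : Fin k → Env} {Gs : Fin k → GenTy} {prems : ∀ i, Deriv (Γs i) t (Gs i)}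
      (i : Fin k) {n} {Γ' u G'} {π' : Deriv Γ' u G'} :
      SubD (prems i) n π' → SubD (Deriv.many k Γs Gs prems) (n+1) π'

section Aux

/-! ### casts -/

def Deriv.castEnv {Γ Γ' : Env} (h : Γ = Γ') {t G} (π : Deriv Γ t G) : Deriv Γ' t G := h ▸ π

@[simp] lemma Deriv.castEnv_size {Γ Γ' : Env} (h : Γ = Γ') {t G} (π : Deriv Γ t G) :
    (π.castEnv h).size = π.size := by cases h; rfl

def Deriv.castG {Γ : Env} {t G G'} (h : G = G') (π : Deriv Γ t G) : Deriv Γ t G' := h ▸ π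

@[simp] lemma Deriv.castG_size {Γ : Env} {t G G'} (h : G = G') (π : Deriv Γ t G) :
    (π.castG h).size = π.size := by cases h; rfl

def Deriv.castTm {Γ : Env} {t t' G} (h : t = t') (π : Deriv Γ t G) : Deriv Γ t' G := h ▸ π

/-! ### env operations -/

def Env.insertAt (k : ℕ) (T : TreeTy) (Γ : Env) : Env :=
  fun x => if x < k then Γ x else if x = k then T else Γ (x-1)

def Env.removeAt (k : ℕ) (Γ : Env) : Env :=
  fun x => if x < k then Γ x else Γ (x+1)

def catF {n : ℕ} (Ts : Fin n → TreeTy) : TreeTy := (List.ofFn Ts).foldr TreeTy.cat (.node [])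

@[simp] lemma cat_node (a b : List GenTy) :
    TreeTy.cat (.node a) (.node b) = .node (a ++ b) := rfl

lemma cat_nil_right (T : TreeTy) : TreeTy.cat T (.node []) = T := by
  cases T with | node l => simp

@[simp] lemma wrap_nil : TreeTy.wrap (.node []) = .node [] := rfl

lemma wrap_cons (g : GenTy) (l : List GenTy) :
    TreeTy.wrap (.node (g :: l)) = .node [.tree (.node (g :: l))] := rfl

lemma unionF_apply : ∀ {n : ℕ} (Γs : Fin n → Env) (x : ℕ),
    Env.unionF Γs x = catF (fun i => Γs i x) := by
  intro n
  induction n with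
  | zero => intro Γs x; rfl
  | succ n ih =>
      intro Γs x
      show (List.ofFn Γs).foldr Env.union Env.empty x = _
      rw [List.ofFn_succ]
      show Env.union (Γs 0) (Env.unionF (fun i => Γs i.succ)) x = _
      show TreeTy.cat (Γs 0 x) (Env.unionF (fun i => Γs i.succ) x) = _
      rw [ih]
      show _ = (List.ofFn (fun i => Γs i x)).foldr TreeTy.cat (.node [])
      rw [List.ofFn_succ]
      rfl

lemma catF_zero (Ts : Fin 0 → TreeTy) : catF Ts = .node [] := rfl

lemma catF_succ {n : ℕ} (Ts : Fin (n+1) → TreeTy) :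
    catF Ts = (Ts 0).cat (catF (fun i => Ts i.succ)) := by
  simp [catF, List.ofFn_succ]

lemma catF_empty : ∀ {n : ℕ} (Ts : Fin n → TreeTy), (∀ i, Ts i = .node []) → catF Ts = .node [] := by
  intro n
  induction n with
  | zero => intro Ts _; rfl
  | succ n ih =>
      intro Ts h
      rw [catF_succ, h 0, ih _ (fun i => h i.succ)]
      rfl

/-! ### closedness -/

lemma Term.ClosedUnder.mono : ∀ {t : Term} {k m : ℕ}, t.ClosedUnder k → k ≤ m → t.ClosedUnder m := by
  intro t
  induction t with
  | var n => intro k m h hkm; exact lt_of_lt_of_le h hkm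
  | lam t ih => intro k m h hkm; exact ih h (by omega)
  | app t u iht ihu => intro k m h hkm; exact ⟨iht h.1 hkm, ihu h.2 hkm⟩

lemma not_freeIn : ∀ {t : Term} {k x : ℕ}, t.ClosedUnder k → k ≤ x → ¬ t.FreeIn x := by
  intro t
  induction t with
  | var n =>
      intro k x h hkx hf
      have h1 : n = x := hf
      have h2 : n < k := h
      omega
  | lam t ih => intro k x h hkx hf; exact ih h (by omega) hf
  | app t u iht ihu =>
      intro k x h hkx hf
      rcases hf with hf | hf
      · exact iht h.1 hkx hf
      · exact ihu h.2 hkx hf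

lemma closed_env : ∀ {Γ : Env} {s : Term} {G : GenTy}, Deriv Γ s G →
    ∀ x, ¬ s.FreeIn x → Γ x = .node [] := by
  intro Γ s G π
  induction π with
  | var y A =>
      intro x hx
      have : ¬ (x = y) := fun h => hx h.symm
      simp [Env.single, this]
  | lam π ih => intro x hx; exact ih (x+1) hx
  | lamStar t => intro x hx; rfl
  | app π ρ ih₁ ih₂ =>
      intro x hx
      show TreeTy.cat _ _ = _
      rw [ih₁ x (fun h => hx (Or.inl h)), ih₂ x (fun h => hx (Or.inr h))]
      rfl
  | many n Γs Gs prems ih =>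
      intro x hx
      show ((Env.unionF Γs) x).wrap = _
      rw [unionF_apply, catF_empty _ (fun i => ih i x hx)]
      rfl
  | none t => intro x hx; rfl

lemma closed_env_empty {Γ : Env} {s : Term} {G : GenTy} (π : Deriv Γ s G) (h : s.Closed) :
    Γ = Env.empty :=
  funext fun x => closed_env π x (not_freeIn h (Nat.zero_le x))

lemma lift_closed : ∀ {t : Term} {c : ℕ} (d : ℕ), t.ClosedUnder c → Term.lift d c t = t := by
  intro t
  induction t with
  | var n =>
      intro c d h
      have h' : n < c := h
      simp [Term.lift, h']
  | lam t ih => intro c d h; simp [Term.lift, ih d h]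
  | app t u iht ihu => intro c d h; simp [Term.lift, iht d h.1, ihu d h.2]

lemma lift_closed0 {u : Term} (hu : u.Closed) (d c : ℕ) : Term.lift d c u = u :=
  lift_closed d (hu.mono (Nat.zero_le c))

lemma subst_closedUnder : ∀ {t : Term} {k : ℕ}, t.ClosedUnder (k+1) → ∀ {u : Term}, u.Closed →
    (Term.subst u k t).ClosedUnder k := by
  intro t
  induction t with
  | var n =>
      intro k h u hu
      by_cases hn : n = k
      · simp [Term.subst, hn, lift_closed0 hu]
        exact hu.mono (Nat.zero_le k)
      · have hkn : ¬ k < n := by simp [Term.ClosedUnder] at h; omega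
        simp [Term.subst, hn, hkn]
        show n < k
        simp [Term.ClosedUnder] at h; omega
  | lam t ih => intro k h u hu; exact ih h hu
  | app t s iht ihs => intro k h u hu; exact ⟨iht h.1 hu, ihs h.2 hu⟩

lemma whr_closed : ∀ {t t' : Term}, Whr t t' → t.Closed → t'.Closed := by
  intro t t' h
  induction h with
  | beta s u => intro hc; exact subst_closedUnder hc.1 hc.2
  | appL u h ih => intro hc; exact ⟨ih hc.1, hc.2⟩

end Aux
section Aux2

/-- `P w g n`: there is a derivation of `g` for `w` in the empty env of size `≤ n`. -/
def P (w : Term) (g : GenTy) (n : ℕ) : Prop := ∃ π : Deriv Env.empty w g, π.size ≤ n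

lemma P.mono {w g m n} (h : P w g m) (hmn : m ≤ n) : P w g n :=
  ⟨h.choose, le_trans h.choose_spec hmn⟩

lemma wrap_unionF_const_empty {n : ℕ} :
    Env.wrap (Env.unionF (fun _ : Fin n => Env.empty)) = Env.empty := by
  funext x
  show ((Env.unionF _) x).wrap = _
  rw [unionF_apply, catF_empty (fun _ : Fin n => Env.empty x) (fun _ => rfl)]
  rfl

/-- Introduction: build a `T-many` derivation from component derivations. -/
lemma P_tree_intro (w : Term) (gs : List GenTy) (ms : Fin gs.length → ℕ)
    (h : ∀ i : Fin gs.length, P w (gs.get i) (ms i)) :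
    P w (.tree (.node gs)) (∑ i, ms i) := by
  choose prems hs using h
  refine ⟨((Deriv.many gs.length (fun _ => Env.empty) gs.get prems).castG
    (by rw [List.ofFn_get])).castEnv wrap_unionF_const_empty, ?_⟩
  simp only [Deriv.castEnv_size, Deriv.castG_size]
  show (∑ i, (prems i).size) ≤ _
  exact Finset.sum_le_sum (fun i _ => hs i)

/-- Elimination: a derivation of a tree type yields component derivations. -/
lemma P_tree_elim {Γ : Env} {w : Term} {gs : List GenTy}
    (π : Deriv Γ w (.tree (.node gs))) (hw : w.Closed) :
    ∃ ms : Fin gs.length → ℕ, (∑ i, ms i) ≤ π.size ∧ ∀ i, P w (gs.get i) (ms i) := by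
  cases π with
  | many n Γs Gs prems =>
      have hlen : (List.ofFn Gs).length = n := List.length_ofFn
      refine ⟨fun i => (prems (Fin.cast hlen i)).size, ?_, ?_⟩
      · have heq := Fintype.sum_equiv (finCongr hlen)
          (fun i => (prems (Fin.cast hlen i)).size) (fun j => (prems j).size) (fun i => rfl)
        exact le_of_eq heq
      · intro i
        have hg : (List.ofFn Gs).get i = Gs (Fin.cast hlen i) := by
          simp only [List.get_ofFn]
        rw [hg]
        exact ⟨(prems _).castEnv (closed_env_empty (prems _) hw), by simp⟩
  | none =>
      exact ⟨fun i => 0, by simp, fun i => absurd i.2 (Nat.not_lt_zero _)⟩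

lemma P_single {w : Term} {g : GenTy} {n : ℕ} (h : P w g n) : P w (.tree (.node [g])) n := by
  have key := P_tree_intro w [g] (fun _ => n) ?_
  · simpa using key
  · rintro ⟨iv, hiv⟩
    have hiv0 : iv = 0 := by simp at hiv; omega
    subst hiv0
    exact h

lemma P_single_elim {w : Term} {g : GenTy} {n : ℕ} (hw : w.Closed)
    (h : P w (.tree (.node [g])) n) : P w g n := by
  obtain ⟨π, hπ⟩ := h
  obtain ⟨ms, hsum, hcomp⟩ := P_tree_elim π hw
  have h0 : (0:ℕ) < [g].length := by simp
  have hc : P w g (ms ⟨0, h0⟩) := hcomp ⟨0, h0⟩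
  have hle : ms ⟨0, h0⟩ ≤ ∑ i, ms i :=
    Finset.single_le_sum (fun i _ => Nat.zero_le _) (Finset.mem_univ _)
  exact hc.mono (by omega)

lemma P_cat_merge {w : Term} (hw : w.Closed) {a b : List GenTy} {p q : ℕ}
    (h₁ : P w (.tree (.node a)) p) (h₂ : P w (.tree (.node b)) q) :
    P w (.tree (.node (a ++ b))) (p + q) := by
  obtain ⟨π₁, hπ₁⟩ := h₁
  obtain ⟨π₂, hπ₂⟩ := h₂
  obtain ⟨ms₁, hsum₁, hcomp₁⟩ := P_tree_elim π₁ hw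
  obtain ⟨ms₂, hsum₂, hcomp₂⟩ := P_tree_elim π₂ hw
  have hlen : (a ++ b).length = a.length + b.length := List.length_append
  have key := P_tree_intro w (a ++ b)
    (fun i => if h : (i : ℕ) < a.length then ms₁ ⟨i, h⟩ else ms₂ ⟨i - a.length, by omega⟩) ?_
  · refine key.mono ?_
    have : (∑ i : Fin (a++b).length,
        (if h : (i : ℕ) < a.length then ms₁ ⟨i, h⟩ else ms₂ ⟨i - a.length, by omega⟩))
        = ∑ i, ms₁ i + ∑ i, ms₂ i := by
      rw [← Fintype.sum_equiv (finCongr hlen.symm) _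
        (fun i : Fin ((a++b).length) => if h : (i : ℕ) < a.length then ms₁ ⟨i, h⟩ else ms₂ ⟨i - a.length, by omega⟩) (fun i => rfl)]
      rw [Fin.sum_univ_add]
      congr 1
      · apply Finset.sum_congr rfl
        intro i _
        simp [Fin.castAdd]
      · apply Finset.sum_congr rfl
        intro i _
        simp [Fin.natAdd]
    omega
  · intro i
    by_cases h : (i : ℕ) < a.length
    · have hg : (a ++ b).get i = a.get ⟨i, h⟩ := by
        simp [List.getElem_append, h]
      rw [hg]
      simpa [h] using hcomp₁ ⟨i, h⟩
    · have hib : (i : ℕ) - a.length < b.length := by omega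
      have hg : (a ++ b).get i = b.get ⟨i - a.length, hib⟩ := by
        simp [List.getElem_append, h]
      rw [hg]
      simpa [h] using hcomp₂ ⟨i - a.length, hib⟩

lemma P_cat_split {w : Term} (hw : w.Closed) {a b : List GenTy} {n : ℕ}
    (h : P w (.tree (.node (a ++ b))) n) :
    ∃ p q, p + q ≤ n ∧ P w (.tree (.node a)) p ∧ P w (.tree (.node b)) q := by
  obtain ⟨π, hπ⟩ := h
  obtain ⟨ms, hsum, hcomp⟩ := P_tree_elim π hw
  have hlen : (a ++ b).length = a.length + b.length := List.length_append
  refine ⟨∑ i : Fin a.length, ms ⟨i, by omega⟩, ∑ i : Fin b.length, ms ⟨a.length + i, by omega⟩,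
    ?_, ?_, ?_⟩
  · have : (∑ i, ms i) = ∑ i : Fin a.length, ms ⟨i, by omega⟩ + ∑ i : Fin b.length, ms ⟨a.length + i, by omega⟩ := by
      rw [← Fintype.sum_equiv (finCongr hlen.symm) _ ms (fun i => rfl), Fin.sum_univ_add]
      congr 1
    omega
  · refine (P_tree_intro w a (fun i => ms ⟨i, by omega⟩) ?_).mono le_rfl
    intro i
    have hg : a.get i = (a ++ b).get ⟨i, by omega⟩ := by
      simp [List.getElem_append, i.2]
    rw [hg]
    exact hcomp _
  · refine (P_tree_intro w b (fun i => ms ⟨a.length + i, by omega⟩) ?_).mono le_rfl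
    intro i
    have hg : b.get i = (a ++ b).get ⟨a.length + i, by omega⟩ := by
      simp [List.getElem_append]
    rw [hg]
    exact hcomp _

lemma P_cat_merge' {w : Term} (hw : w.Closed) {T₁ T₂ : TreeTy} {p q : ℕ}
    (h₁ : P w (.tree T₁) p) (h₂ : P w (.tree T₂) q) : P w (.tree (T₁.cat T₂)) (p + q) := by
  cases T₁ with | node a => cases T₂ with | node b => exact P_cat_merge hw h₁ h₂

lemma P_cat_split' {w : Term} (hw : w.Closed) {T₁ T₂ : TreeTy} {n : ℕ}
    (h : P w (.tree (T₁.cat T₂)) n) :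
    ∃ p q, p + q ≤ n ∧ P w (.tree T₁) p ∧ P w (.tree T₂) q := by
  cases T₁ with | node a => cases T₂ with | node b => exact P_cat_split hw h

lemma P_wrap {w : Term} {T : TreeTy} {n : ℕ} (h : P w (.tree T) n) : P w (.tree T.wrap) n := by
  cases T with
  | node l =>
    cases l with
    | nil => exact ⟨Deriv.none w, Nat.zero_le n⟩
    | cons g l => rw [wrap_cons]; exact P_single h

lemma P_wrap_elim {w : Term} (hw : w.Closed) {T : TreeTy} {n : ℕ}
    (h : P w (.tree T.wrap) n) : P w (.tree T) n := by
  cases T with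
  | node l =>
    cases l with
    | nil => exact h
    | cons g l => rw [wrap_cons] at h; exact P_single_elim hw h

lemma P_catF_merge {w : Term} (hw : w.Closed) : ∀ {n : ℕ} {Ts : Fin n → TreeTy} {ms : Fin n → ℕ},
    (∀ i, P w (.tree (Ts i)) (ms i)) → P w (.tree (catF Ts)) (∑ i, ms i) := by
  intro n
  induction n with
  | zero =>
      intro Ts ms h
      refine ⟨Deriv.none w, ?_⟩
      show (0:ℕ) ≤ _
      exact Nat.zero_le _
  | succ n ih =>
      intro Ts ms h
      rw [catF_succ, Fin.sum_univ_succ]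
      exact P_cat_merge' hw (h 0) (ih (fun i => h i.succ))

lemma P_catF_split {w : Term} (hw : w.Closed) : ∀ {n : ℕ} {Ts : Fin n → TreeTy} {m : ℕ},
    P w (.tree (catF Ts)) m → ∃ ms : Fin n → ℕ, (∑ i, ms i) ≤ m ∧ ∀ i, P w (.tree (Ts i)) (ms i) := by
  intro n
  induction n with
  | zero => intro Ts m h; exact ⟨fun _ => 0, by simp, fun i => absurd i.2 (Nat.not_lt_zero _)⟩
  | succ n ih =>
      intro Ts m h
      rw [catF_succ] at h
      obtain ⟨p, q, hpq, h₁, h₂⟩ := P_cat_split' hw h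
      obtain ⟨ms, hsum, hcomp⟩ := ih h₂
      refine ⟨Fin.cons p ms, ?_, ?_⟩
      · rw [Fin.sum_univ_succ]
        simp only [Fin.cons_zero, Fin.cons_succ]
        omega
      · intro i
        refine Fin.cases ?_ ?_ i
        · simpa using h₁
        · intro j; simpa using hcomp j

end Aux2
section Aux3

lemma insertAt_empty_nil (k : ℕ) : Env.insertAt k (.node []) Env.empty = Env.empty := by
  funext x
  unfold Env.insertAt
  split <;> [rfl; (split <;> rfl)]

lemma insertAt_single (k : ℕ) (A : LinTy) :
    Env.insertAt k (.node [.lin A]) Env.empty = Env.single k A := by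
  funext x
  unfold Env.insertAt Env.single Env.empty
  by_cases h1 : x < k
  · simp [h1, show ¬ x = k by omega]
  · by_cases h2 : x = k <;> simp [h1, h2]

lemma insertAt_wrap_unionF {n k : ℕ} (Ts : Fin n → TreeTy) (Γs : Fin n → Env) :
    Env.wrap (Env.unionF (fun i => Env.insertAt k (Ts i) (Γs i))) =
    Env.insertAt k ((catF Ts).wrap) (Env.wrap (Env.unionF Γs)) := by
  funext x
  show ((Env.unionF _) x).wrap = _
  rw [unionF_apply]
  by_cases h1 : x < k
  · have : (fun i => Env.insertAt k (Ts i) (Γs i) x) = fun i => Γs i x := by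
      funext i; simp [Env.insertAt, h1]
    rw [this]
    simp [Env.insertAt, h1, Env.wrap, unionF_apply]
  · by_cases h2 : x = k
    · have : (fun i => Env.insertAt k (Ts i) (Γs i) x) = Ts := by
        funext i; simp [Env.insertAt, h1, h2]
      rw [this]
      simp [Env.insertAt, h1, h2]
    · have : (fun i => Env.insertAt k (Ts i) (Γs i) x) = fun i => Γs i (x-1) := by
        funext i; simp [Env.insertAt, h1, h2]
      rw [this]
      simp [Env.insertAt, h1, h2, Env.wrap, unionF_apply]

lemma insertAt_union {k : ℕ} (T₁ T₂ : TreeTy) (Γ₁ Γ₂ : Env) :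
    Env.union (Env.insertAt k T₁ Γ₁) (Env.insertAt k T₂ Γ₂) =
    Env.insertAt k (T₁.cat T₂) (Env.union Γ₁ Γ₂) := by
  funext x
  show TreeTy.cat _ _ = _
  unfold Env.insertAt
  by_cases h1 : x < k
  · simp [h1]; rfl
  · by_cases h2 : x = k <;> simp [h1, h2] <;> rfl

lemma insertAt_cons {k : ℕ} (T T' : TreeTy) (Γ : Env) :
    Env.insertAt (k+1) T (Env.cons T' Γ) = Env.cons T' (Env.insertAt k T Γ) := by
  funext x
  cases x with
  | zero => simp [Env.insertAt, Env.cons]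
  | succ x =>
      show Env.insertAt (k+1) T (Env.cons T' Γ) (x+1) = Env.insertAt k T Γ x
      unfold Env.insertAt
      by_cases h1 : x < k
      · simp [show x + 1 < k + 1 from by omega, h1]; rfl
      · by_cases h2 : x = k
        · simp [show ¬ (x+1 < k+1) from by omega, h1, h2]
        · simp only [if_neg (show ¬ (x+1 < k+1) from by omega), if_neg h1,
            if_neg (show ¬ (x+1 = k+1) from by omega), if_neg h2]
          obtain ⟨x', rfl⟩ : ∃ x', x = x' + 1 := ⟨x - 1, by omega⟩
          show Γ x' = Γ (x' + 1 - 1)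
          simp

lemma insertAt_zero (T : TreeTy) (Γ : Env) : Env.insertAt 0 T Γ = Env.cons T Γ := by
  funext x
  cases x with
  | zero => rfl
  | succ x => show Env.insertAt 0 T Γ (x+1) = Γ x; simp [Env.insertAt]

lemma subst_var_self (u : Term) (hu : u.Closed) (k : ℕ) : Term.subst u k (.var k) = u := by
  simp [Term.subst, lift_closed0 hu]

lemma insertAt_nil_single {k n : ℕ} (A : LinTy) (hkn : k < n) :
    Env.single n A = Env.insertAt k (.node []) (Env.single (n-1) A) := by
  funext y
  unfold Env.insertAt Env.single
  by_cases h1 : y < k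
  · rw [if_pos h1, if_neg (by omega : ¬ y = n), if_neg (by omega : ¬ y = n - 1)]
  · rw [if_neg h1]
    by_cases h2 : y = k
    · rw [if_pos h2, if_neg (by omega : ¬ y = n)]
    · rw [if_neg h2]
      by_cases h3 : y = n
      · rw [if_pos h3, if_pos (by omega : y - 1 = n - 1)]
      · rw [if_neg h3, if_neg (by omega : ¬ y - 1 = n - 1)]

lemma insertAt_nil_single' {k n : ℕ} (A : LinTy) (hnk : n < k) :
    Env.single n A = Env.insertAt k (.node []) (Env.single n A) := by
  funext y
  unfold Env.insertAt Env.single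
  by_cases h1 : y < k
  · rw [if_pos h1]
  · rw [if_neg h1]
    by_cases h2 : y = k
    · rw [if_pos h2, if_neg (by omega : ¬ y = n)]
    · rw [if_neg h2, if_neg (by omega : ¬ y - 1 = n), if_neg (by omega : ¬ y = n)]

/-- Typing `var k` at an arbitrary generic type `G`, with the matching tree type `T`
for the environment; moreover any closed term typed with `G` can be typed with `[T]`. -/
lemma varTyping : ∀ (G : GenTy) (k : ℕ), ∃ T : TreeTy,
    Nonempty (Deriv (Env.insertAt k T Env.empty) (.var k) G) ∧
    (∀ u : Term, u.Closed → (∃ m, P u G m) → ∃ m, P u (.tree T) m) := by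
  suffices H : ∀ (N : ℕ) (G : GenTy), sizeOf G ≤ N → ∀ (k : ℕ), ∃ T : TreeTy,
      Nonempty (Deriv (Env.insertAt k T Env.empty) (.var k) G) ∧
      (∀ u : Term, u.Closed → (∃ m, P u G m) → ∃ m, P u (.tree T) m) by
    intro G k; exact H (sizeOf G) G le_rfl k
  intro N
  induction N with
  | zero =>
      intro G hG
      exfalso
      cases G <;> simp at hG
  | succ N ih =>
      intro G hG k
      cases G with
      | lin A =>
          refine ⟨.node [.lin A], ⟨(Deriv.var k A).castEnv (insertAt_single k A).symm⟩, ?_⟩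
          rintro u hu ⟨m, hm⟩
          exact ⟨m, P_single hm⟩
      | tree T =>
          cases T with
          | node gs =>
              have hsz : ∀ i : Fin gs.length, sizeOf (gs.get i) ≤ N := by
                intro i
                have hmem : gs.get i ∈ gs := List.get_mem gs i
                have := List.sizeOf_lt_of_mem hmem
                simp at hG
                omega
              have hT := fun i : Fin gs.length => ih (gs.get i) (hsz i) k
              choose Ts hvar himp using hT
              refine ⟨(catF Ts).wrap, ?_, ?_⟩
              · refine ⟨((Deriv.many gs.length (fun i => Env.insertAt k (Ts i) Env.empty)
                  gs.get (fun i => (hvar i).some)).castG (by rw [List.ofFn_get])).castEnv ?_⟩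
                rw [insertAt_wrap_unionF, wrap_unionF_const_empty]
              · rintro u hu ⟨m, π, hπ⟩
                obtain ⟨ms, hsum, hcomp⟩ := P_tree_elim π hu
                have hcomp' : ∀ i, ∃ m', P u (.tree (Ts i)) m' := by
                  intro i
                  exact himp i u hu ⟨ms i, hcomp i⟩
                choose ms' hQ using hcomp'
                exact ⟨∑ i, ms' i, P_wrap (P_catF_merge hu hQ)⟩

/-- Common case: replacing a derivation of closed `u` by `var k`. -/
lemma varCase {u : Term} (hu : u.Closed) {Γ : Env} {G : GenTy} (k : ℕ) (π : Deriv Γ u G) :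
    ∃ T, Nonempty (Deriv (Env.insertAt k T Γ) (.var k) G) ∧ ∃ m, P u (.tree T) m := by
  have hΓ : Γ = Env.empty := closed_env_empty π hu
  obtain ⟨T, hv, himp⟩ := varTyping G k
  refine ⟨T, ⟨(hv.some).castEnv (by rw [hΓ])⟩, himp u hu ⟨π.size, π.castEnv hΓ, by simp⟩⟩

/-- Anti-substitution. -/
lemma antiSubst {u : Term} (hu : u.Closed) :
    ∀ {Γ : Env} {w : Term} {G : GenTy}, Deriv Γ w G → ∀ (s : Term) (k : ℕ),
    w = Term.subst u k s →
    ∃ T, Nonempty (Deriv (Env.insertAt k T Γ) s G) ∧ ∃ m, P u (.tree T) m := by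
  intro Γ w G π
  induction π with
  | var x A =>
      intro s k h
      cases s with
      | var n =>
          by_cases hn : n = k
          · rw [hn, subst_var_self u hu] at h
            exfalso
            rw [← h] at hu
            exact absurd (show (x:ℕ) < 0 from hu) (by omega)
          · by_cases hkn : k < n
            · simp only [Term.subst, if_neg hn, if_pos hkn] at h
              injection h with hx
              subst hx
              exact ⟨.node [], ⟨(Deriv.var n A).castEnv (insertAt_nil_single A hkn)⟩,
                0, ⟨Deriv.none u, le_rfl⟩⟩
            · simp only [Term.subst, if_neg hn, if_neg hkn] at h
              injection h with hx
              rw [hx]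
              exact ⟨.node [], ⟨(Deriv.var n A).castEnv (insertAt_nil_single' A (by omega))⟩,
                0, ⟨Deriv.none u, le_rfl⟩⟩
      | lam s' => exact absurd h (by simp [Term.subst])
      | app s₁ s₂ => exact absurd h (by simp [Term.subst])
  | lam π₁ ih =>
      rename_i Γ' T' t A
      intro s k h
      cases s with
      | var n =>
          by_cases hn : n = k
          · rw [hn, subst_var_self u hu] at h
            rw [hn]
            exact varCase hu k ((Deriv.lam π₁).castTm h)
          · by_cases hkn : k < n <;> simp [Term.subst, hn, hkn] at h
      | lam s' =>
          simp only [Term.subst] at h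
          injection h with h'
          obtain ⟨T, ⟨ν⟩, hQ⟩ := ih s' (k+1) h'
          exact ⟨T, ⟨Deriv.lam (ν.castEnv (insertAt_cons T T' Γ'))⟩, hQ⟩
      | app s₁ s₂ => exact absurd h (by simp [Term.subst])
  | lamStar t =>
      intro s k h
      cases s with
      | var n =>
          by_cases hn : n = k
          · rw [hn, subst_var_self u hu] at h
            rw [hn]
            exact varCase hu k ((Deriv.lamStar t).castTm h)
          · by_cases hkn : k < n <;> simp [Term.subst, hn, hkn] at h
      | lam s' =>
          refine ⟨.node [], ⟨(Deriv.lamStar s').castEnv (insertAt_empty_nil k).symm⟩,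
            0, ⟨Deriv.none u, le_rfl⟩⟩
      | app s₁ s₂ => exact absurd h (by simp [Term.subst])
  | app π₁ ρ ih₁ ih₂ =>
      rename_i Γ₁ Γ₂ t₁ t₂ T' A
      intro s k h
      cases s with
      | var n =>
          by_cases hn : n = k
          · rw [hn, subst_var_self u hu] at h
            rw [hn]
            exact varCase hu k ((Deriv.app π₁ ρ).castTm h)
          · by_cases hkn : k < n <;> simp [Term.subst, hn, hkn] at h
      | lam s' => exact absurd h (by simp [Term.subst])
      | app s₁ s₂ =>
          simp only [Term.subst] at h
          injection h with h₁ h₂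
          obtain ⟨T₁, ⟨ν₁⟩, m₁, hQ₁⟩ := ih₁ s₁ k h₁
          obtain ⟨T₂, ⟨ν₂⟩, m₂, hQ₂⟩ := ih₂ s₂ k h₂
          exact ⟨T₁.cat T₂, ⟨(Deriv.app ν₁ ν₂).castEnv (insertAt_union T₁ T₂ Γ₁ Γ₂)⟩,
            m₁ + m₂, P_cat_merge' hu hQ₁ hQ₂⟩
  | many n' Γs Gs prems ih =>
      intro s k h
      have hIH := fun i => ih i s k h
      choose Ts hν hQ using hIH
      choose ms hms using hQ
      refine ⟨(catF Ts).wrap,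
        ⟨(Deriv.many n' (fun i => Env.insertAt k (Ts i) (Γs i)) Gs
          (fun i => (hν i).some)).castEnv (insertAt_wrap_unionF Ts Γs)⟩,
        ∑ i, ms i, P_wrap (P_catF_merge hu hms)⟩
  | none t =>
      intro s k h
      exact ⟨.node [], ⟨(Deriv.none s).castEnv (insertAt_empty_nil k).symm⟩,
        0, ⟨Deriv.none u, le_rfl⟩⟩

end Aux3
section Aux4

lemma whr_inv {t w : Term} (h : Whr t w) :
    (∃ s u, t = .app (.lam s) u ∧ w = Term.subst0 s u) ∨
    (∃ t₁ t₁' u, t = .app t₁ u ∧ w = .app t₁' u ∧ Whr t₁ t₁') := by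
  cases h with
  | beta s u => exact Or.inl ⟨s, u, rfl, rfl⟩
  | appL u h => exact Or.inr ⟨_, _, u, rfl, rfl, h⟩

lemma union_empty_right (Γ : Env) : Env.union Γ Env.empty = Γ := by
  funext x
  show TreeTy.cat (Γ x) (.node []) = Γ x
  exact cat_nil_right _

/-- Subject expansion for a root β-step, at a linear type. -/
lemma betaExp {Γ : Env} {s u : Term} {A : LinTy} (hs : s.ClosedUnder 1) (hu : u.Closed)
    (π : Deriv Γ (Term.subst0 s u) (.lin A)) :
    Nonempty (Deriv Γ (.app (.lam s) u) (.lin A)) := by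
  obtain ⟨T, ⟨ν⟩, m, μ, _⟩ := antiSubst hu π s 0 rfl
  exact ⟨(Deriv.app (Deriv.lam (ν.castEnv (insertAt_zero T Γ))) μ).castEnv
    (union_empty_right Γ)⟩

/-- Subject expansion along one weak-head step (closed terms). -/
lemma expansion : ∀ {Γ : Env} {w : Term} {G : GenTy}, Deriv Γ w G →
    ∀ {t : Term}, Whr t w → t.Closed → Nonempty (Deriv Γ t G) := by
  intro Γ w G π
  induction π with
  | var x A =>
      intro t h hc
      rcases whr_inv h with ⟨s, u, ht, hw⟩ | ⟨t₁, t₁', u, ht, hw, h'⟩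
      · subst ht
        exact betaExp hc.1 hc.2 ((Deriv.var x A).castTm hw)
      · exact absurd hw (by simp)
  | lam π₁ ih =>
      intro t h hc
      rcases whr_inv h with ⟨s, u, ht, hw⟩ | ⟨t₁, t₁', u, ht, hw, h'⟩
      · subst ht
        exact betaExp hc.1 hc.2 ((Deriv.lam π₁).castTm hw)
      · exact absurd hw (by simp)
  | lamStar t₀ =>
      intro t h hc
      rcases whr_inv h with ⟨s, u, ht, hw⟩ | ⟨t₁, t₁', u, ht, hw, h'⟩
      · subst ht
        exact betaExp hc.1 hc.2 ((Deriv.lamStar t₀).castTm hw)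
      · exact absurd hw (by simp)
  | app π₁ ρ ih₁ ih₂ =>
      intro t h hc
      rcases whr_inv h with ⟨s, u, ht, hw⟩ | ⟨t₁, t₁', u, ht, hw, h'⟩
      · subst ht
        exact betaExp hc.1 hc.2 ((Deriv.app π₁ ρ).castTm hw)
      · subst ht
        injection hw with hw₁ hw₂
        subst hw₁
        subst hw₂
        obtain ⟨ν⟩ := ih₁ h' hc.1
        exact ⟨Deriv.app ν ρ⟩
  | many n Γs Gs prems ih =>
      intro t h hc
      exact ⟨Deriv.many n Γs Gs (fun i => (ih i h hc).some)⟩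
  | none t₀ =>
      intro t h hc
      exact ⟨Deriv.none t⟩

lemma complete : ∀ {n : ℕ} {t w : Term}, WhN n t w → ∀ s, w = .lam s → t.Closed →
    Nonempty (Deriv Env.empty t (.lin .star)) := by
  intro n t w h
  induction h with
  | refl t => intro s hw hc; subst hw; exact ⟨Deriv.lamStar s⟩
  | step h₁ h₂ ih =>
      intro s hw hc
      obtain ⟨π⟩ := ih s hw (whr_closed h₁ hc)
      exact expansion π h₁ hc

end Aux4
section Aux5

lemma removeAt_empty (k : ℕ) : Env.removeAt k Env.empty = Env.empty := by
  funext x; unfold Env.removeAt; split <;> rfl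

lemma removeAt_single_self {k : ℕ} (A : LinTy) :
    Env.removeAt k (Env.single k A) = Env.empty := by
  funext x
  unfold Env.removeAt Env.single
  by_cases h1 : x < k
  · rw [if_pos h1, if_neg (by omega : ¬ x = k)]; rfl
  · rw [if_neg h1, if_neg (by omega : ¬ x + 1 = k)]; rfl

lemma removeAt_single_gt {k n : ℕ} (A : LinTy) (h : k < n) :
    Env.removeAt k (Env.single n A) = Env.single (n-1) A := by
  funext x
  unfold Env.removeAt Env.single
  by_cases h1 : x < k
  · rw [if_pos h1, if_neg (by omega : ¬ x = n), if_neg (by omega : ¬ x = n - 1)]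
  · rw [if_neg h1]
    by_cases h2 : x + 1 = n
    · rw [if_pos h2, if_pos (by omega : x = n - 1)]
    · rw [if_neg h2, if_neg (by omega : ¬ x = n - 1)]

lemma removeAt_single_lt {k n : ℕ} (A : LinTy) (h : n < k) :
    Env.removeAt k (Env.single n A) = Env.single n A := by
  funext x
  unfold Env.removeAt Env.single
  by_cases h1 : x < k
  · rw [if_pos h1]
  · rw [if_neg h1, if_neg (by omega : ¬ x + 1 = n), if_neg (by omega : ¬ x = n)]

lemma removeAt_cons {k : ℕ} (T' : TreeTy) (Γ : Env) :
    Env.removeAt (k+1) (Env.cons T' Γ) = Env.cons T' (Env.removeAt k Γ) := by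
  funext x
  cases x with
  | zero =>
      show Env.removeAt (k+1) (Env.cons T' Γ) 0 = T'
      unfold Env.removeAt
      rw [if_pos (by omega : (0:ℕ) < k+1)]
      rfl
  | succ x =>
      show Env.removeAt (k+1) (Env.cons T' Γ) (x+1) = Env.removeAt k Γ x
      unfold Env.removeAt
      by_cases h1 : x < k
      · rw [if_pos (by omega : x+1 < k+1), if_pos h1]; rfl
      · rw [if_neg (by omega : ¬ x+1 < k+1), if_neg h1]; rfl

lemma removeAt_union {k : ℕ} (Γ₁ Γ₂ : Env) :
    Env.removeAt k (Env.union Γ₁ Γ₂) =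
      Env.union (Env.removeAt k Γ₁) (Env.removeAt k Γ₂) := by
  funext x
  show Env.removeAt k (Env.union Γ₁ Γ₂) x = TreeTy.cat _ _
  unfold Env.removeAt Env.union
  split <;> rfl

lemma removeAt_wrap_unionF {n k : ℕ} (Γs : Fin n → Env) :
    Env.wrap (Env.unionF (fun i => Env.removeAt k (Γs i))) =
    Env.removeAt k (Env.wrap (Env.unionF Γs)) := by
  funext x
  show ((Env.unionF _) x).wrap = Env.removeAt k (fun y => ((Env.unionF Γs) y).wrap) x
  rw [unionF_apply]
  unfold Env.removeAt
  split
  · show (catF fun i => Γs i x).wrap = ((Env.unionF Γs) x).wrap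
    rw [unionF_apply]
  · show (catF fun i => Γs i (x+1)).wrap = ((Env.unionF Γs) (x+1)).wrap
    rw [unionF_apply]

lemma cons_at_succ (T' : TreeTy) (Γ : Env) (k : ℕ) : Env.cons T' Γ (k+1) = Γ k := rfl

lemma union_at (Γ₁ Γ₂ : Env) (k : ℕ) :
    Env.union Γ₁ Γ₂ k = TreeTy.cat (Γ₁ k) (Γ₂ k) := rfl

/-- The quantitative substitution lemma. -/
lemma substD {u : Term} (hu : u.Closed) :
    ∀ {Γ : Env} {w : Term} {G : GenTy}, (π : Deriv Γ w G) → ∀ (k : ℕ) {m : ℕ},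
    P u (.tree (Γ k)) m →
    ∃ π' : Deriv (Env.removeAt k Γ) (Term.subst u k w) G, π'.size ≤ π.size + m := by
  intro Γ w G π
  induction π with
  | var x A =>
      intro k m hQ
      by_cases hx : x = k
      · subst hx
        have hGk : Env.single x A x = TreeTy.node [.lin A] := by simp [Env.single]
        rw [hGk] at hQ
        obtain ⟨πu, hπu⟩ := P_single_elim hu hQ
        rw [subst_var_self u hu]
        refine ⟨πu.castEnv (removeAt_single_self A).symm, ?_⟩
        simp only [Deriv.castEnv_size]
        have : (Deriv.var x A).size = 1 := rfl
        omega
      · by_cases hkx : k < x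
        · rw [show Term.subst u k (.var x) = .var (x-1) from by simp [Term.subst, hx, hkx]]
          refine ⟨(Deriv.var (x-1) A).castEnv (removeAt_single_gt A hkx).symm, ?_⟩
          simp only [Deriv.castEnv_size]
          have h1 : (Deriv.var (x-1) A).size = 1 := rfl
          have h2 : (Deriv.var x A).size = 1 := rfl
          omega
        · rw [show Term.subst u k (.var x) = .var x from by simp [Term.subst, hx, hkx]]
          refine ⟨(Deriv.var x A).castEnv (removeAt_single_lt A (by omega)).symm, ?_⟩
          simp only [Deriv.castEnv_size]
          omega
  | lam π₁ ih =>
      rename_i Γ' T' t A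
      intro k m hQ
      have hQ' : P u (.tree ((Env.cons T' Γ') (k+1))) m := hQ
      obtain ⟨π₁', hπ₁'⟩ := ih (k+1) hQ'
      refine ⟨Deriv.lam (π₁'.castEnv (removeAt_cons T' Γ')), ?_⟩
      have e1 : (Deriv.lam (π₁'.castEnv (removeAt_cons T' Γ'))).size
          = (π₁'.castEnv (removeAt_cons T' Γ')).size + 1 := rfl
      have e2 : (Deriv.lam π₁).size = π₁.size + 1 := rfl
      show (Deriv.lam (π₁'.castEnv (removeAt_cons T' Γ'))).size ≤ (Deriv.lam π₁).size + m
      rw [e1, e2, Deriv.castEnv_size]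
      omega
  | lamStar t =>
      intro k m hQ
      refine ⟨(Deriv.lamStar (Term.subst u (k+1) t)).castEnv (removeAt_empty k).symm, ?_⟩
      show ((Deriv.lamStar (Term.subst u (k+1) t)).castEnv (removeAt_empty k).symm).size ≤ (Deriv.lamStar t).size + m
      simp only [Deriv.castEnv_size]
      have e1 : (Deriv.lamStar (Term.subst u (k+1) t)).size = 1 := rfl
      have e2 : (Deriv.lamStar t).size = 1 := rfl
      omega
  | app π₁ ρ ih₁ ih₂ =>
      rename_i Γ₁ Γ₂ t₁ t₂ T' A
      intro k m hQ
      rw [show Env.union Γ₁ Γ₂ k = TreeTy.cat (Γ₁ k) (Γ₂ k) from rfl] at hQ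
      obtain ⟨m₁, m₂, hm, hQ₁, hQ₂⟩ := P_cat_split' hu hQ
      obtain ⟨π₁', hπ₁'⟩ := ih₁ k hQ₁
      obtain ⟨ρ', hρ'⟩ := ih₂ k hQ₂
      refine ⟨(Deriv.app π₁' ρ').castEnv (removeAt_union Γ₁ Γ₂).symm, ?_⟩
      show ((Deriv.app π₁' ρ').castEnv (removeAt_union Γ₁ Γ₂).symm).size ≤ (Deriv.app π₁ ρ).size + m
      simp only [Deriv.castEnv_size]
      have e1 : (Deriv.app π₁' ρ').size = π₁'.size + ρ'.size + 1 := rfl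
      have e2 : (Deriv.app π₁ ρ).size = π₁.size + ρ.size + 1 := rfl
      omega
  | many n' Γs Gs prems ih =>
      intro k m hQ
      have hQ' : P u (.tree ((catF (fun i => Γs i k)).wrap)) m := by
        rw [show Env.wrap (Env.unionF Γs) k = ((Env.unionF Γs) k).wrap from rfl,
          unionF_apply] at hQ
        exact hQ
      have hQ'' := P_wrap_elim hu hQ'
      obtain ⟨ms, hsum, hcomp⟩ := P_catF_split hu hQ''
      have hIH := fun i => ih i k (hcomp i)
      choose π' hπ' using hIH
      refine ⟨(Deriv.many n' (fun i => Env.removeAt k (Γs i)) Gs π').castEnv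
        (removeAt_wrap_unionF Γs), ?_⟩
      simp only [Deriv.castEnv_size]
      have e1 : (Deriv.many n' (fun i => Env.removeAt k (Γs i)) Gs π').size
          = ∑ i, (π' i).size := rfl
      have e2 : (Deriv.many n' Γs Gs prems).size = ∑ i, (prems i).size := rfl
      rw [e1, e2]
      calc (∑ i, (π' i).size) ≤ ∑ i, ((prems i).size + ms i) :=
            Finset.sum_le_sum (fun i _ => hπ' i)
        _ = (∑ i, (prems i).size) + ∑ i, ms i := by rw [Finset.sum_add_distrib]
        _ ≤ (∑ i, (prems i).size) + m := by omega
  | none t =>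
      intro k m hQ
      exact ⟨(Deriv.none (Term.subst u k t)).castEnv (removeAt_empty k).symm,
        by simp only [Deriv.castEnv_size]; exact Nat.le_add_right _ _⟩

/-- Progress. -/
lemma progress : ∀ {Γ : Env} {t : Term} {G : GenTy}, Deriv Γ t G → t.Closed →
    (∀ T, G ≠ .tree T) → (∃ s, t = .lam s) ∨ (∃ t', Whr t t') := by
  intro Γ t G π
  induction π with
  | var x A => intro hc _; exact absurd (show (x:ℕ) < 0 from hc) (by omega)
  | lam π₁ _ => intro _ _; exact Or.inl ⟨_, rfl⟩
  | lamStar t => intro _ _; exact Or.inl ⟨_, rfl⟩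
  | app π₁ ρ ih₁ _ =>
      intro hc _
      rcases ih₁ hc.1 (by intro T h; cases h) with ⟨s, hs⟩ | ⟨t', ht'⟩
      · subst hs; exact Or.inr ⟨_, Whr.beta _ _⟩
      · exact Or.inr ⟨_, Whr.appL _ ht'⟩
  | many n Γs Gs prems ih => intro _ hG; exact absurd rfl (hG _)
  | none t => intro _ hG; exact absurd rfl (hG _)

/-- Quantitative subject reduction. -/
lemma subjRed : ∀ {t t' : Term}, Whr t t' → ∀ {Γ : Env} {A : LinTy},
    (π : Deriv Γ t (.lin A)) → t.Closed →
    ∃ π' : Deriv Γ t' (.lin A), π'.size < π.size := by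
  intro t t' h
  induction h with
  | beta s v =>
      intro Γ A π hc
      cases π with
      | app π₁ ρ =>
          rename_i Γ₁ Γ₂ T
          cases π₁ with
          | lam π₀ =>
              have hv : v.Closed := hc.2
              have hΓ₂ : Γ₂ = Env.empty := closed_env_empty ρ hv
              have hQ : P v (.tree ((Env.cons T Γ₁) 0)) ρ.size :=
                ⟨ρ.castEnv hΓ₂, le_of_eq (Deriv.castEnv_size hΓ₂ ρ)⟩
              obtain ⟨π', hπ'⟩ := substD hv π₀ 0 hQ
              have henv : Env.removeAt 0 (Env.cons T Γ₁) = Env.union Γ₁ Γ₂ := by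
                rw [hΓ₂, union_empty_right]
                funext x
                show Env.cons T Γ₁ (x+1) = Γ₁ x
                rfl
              refine ⟨π'.castEnv henv, ?_⟩
              show (π'.castEnv henv).size < (Deriv.app (Deriv.lam π₀) ρ).size
              simp only [Deriv.castEnv_size]
              have e1 : (Deriv.app (Deriv.lam π₀) ρ).size = (π₀.size + 1) + ρ.size + 1 := rfl
              rw [e1]
              have : π'.size ≤ π₀.size + ρ.size := hπ'
              omega
  | appL v h' ih =>
      intro Γ A π hc
      cases π with
      | app π₁ ρ =>
          obtain ⟨π₁', hπ₁'⟩ := ih π₁ hc.1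
          refine ⟨Deriv.app π₁' ρ, ?_⟩
          have e1 : (Deriv.app π₁' ρ).size = π₁'.size + ρ.size + 1 := rfl
          have e2 : (Deriv.app π₁ ρ).size = π₁.size + ρ.size + 1 := rfl
          omega

/-- Soundness: typed closed terms are weak-head normalizing. -/
lemma sound : ∀ (N : ℕ) {t : Term}, t.Closed → (π : Deriv Env.empty t (.lin .star)) →
    π.size ≤ N → ∃ n s, WhN n t (.lam s) := by
  intro N
  induction N with
  | zero =>
      intro t hc π hπ
      rcases progress π hc (by intro T h; cases h) with ⟨s, hs⟩ | ⟨t', ht'⟩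
      · exact ⟨0, s, by rw [hs]; exact WhN.refl _⟩
      · obtain ⟨π', hπ'⟩ := subjRed ht' π hc
        omega
  | succ N ih =>
      intro t hc π hπ
      rcases progress π hc (by intro T h; cases h) with ⟨s, hs⟩ | ⟨t', ht'⟩
      · exact ⟨0, s, by rw [hs]; exact WhN.refl _⟩
      · obtain ⟨π', hπ'⟩ := subjRed ht' π hc
        obtain ⟨n, s, hw⟩ := ih (whr_closed ht' hc) π' (by omega)
        exact ⟨n+1, s, WhN.step ht' hw⟩

end Aux5

/-- characterization of termination. A closed λ-term is weak-head
normalizing (reduces in finitely many steps to an abstraction) iff `⊢ t : ⋆` is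
derivable in the tree type system. -/
theorem termination_characterization {t : Term} (hc : t.Closed) :
    (∃ (n : ℕ) (s : Term), WhN n t (.lam s)) ↔
    Nonempty (Deriv Env.empty t (.lin .star)) := by
  constructor
  · rintro ⟨n, s, hw⟩
    exact complete hw s rfl hc
  · rintro ⟨π⟩
    exact sound π.size hc π le_rfl
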